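/- Let K be a field of characteristic zero, f ∈ K[x,y] irreducible with f_y ≠ 0, q ∈ K[x,y], s ≥ 1, and c ∈ K. Suppose q_y = f^s and f divides q + c in K[x,y]. Then f^{s+1} divides q + c. -/

import Mathlib

open MvPolynomial

noncomputable def phi2 (K : Type*) [Field K] :
    MvPolynomial (Fin 2) K ≃ₐ[K] Polynomial (MvPolynomial (Fin 1) K) :=
  (renameEquiv K (Equiv.swap (0 : Fin 2) 1)).trans (MvPolynomial.finSuccEquiv K 1)

lemma phi2_pderiv (K : Type*) [Field K] (p : MvPolynomial (Fin 2) K) :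
    phi2 K (pderiv (1 : Fin 2) p) = Polynomial.derivative (phi2 K p) := by
  induction p using MvPolynomial.induction_on with
  | C a => simp [phi2, MvPolynomial.finSuccEquiv_apply]
  | add p q hp hq => simp [map_add, hp, hq]
  | mul_X p i hp =>
    rw [pderiv_mul, map_add, map_mul, map_mul, map_mul, Polynomial.derivative_mul, hp]
    rw [add_right_inj]
    fin_cases i
    · have : pderiv (1 : Fin 2) (X 0 : MvPolynomial (Fin 2) K) = 0 := by
        rw [pderiv_X_of_ne]; decide
      have h2 : phi2 K (X 0 : MvPolynomial (Fin 2) K) = Polynomial.C (X 0) := by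
        simp [phi2, Equiv.swap_apply_left]
        exact MvPolynomial.finSuccEquiv_X_succ (j := 0)
      simp [this, h2]
    · have : pderiv (1 : Fin 2) (X 1 : MvPolynomial (Fin 2) K) = 1 := pderiv_X_self 1
      have h2 : phi2 K (X 1 : MvPolynomial (Fin 2) K) = Polynomial.X := by
        simp [phi2, Equiv.swap_apply_right]
        exact MvPolynomial.finSuccEquiv_X_zero
      simp [this, h2]

lemma f_not_dvd_fy (K : Type*) [Field K]
    (f : MvPolynomial (Fin 2) K) (hfy : pderiv (1 : Fin 2) f ≠ 0) :
    ¬ f ∣ pderiv (1 : Fin 2) f := by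
  intro hdvd
  set F := phi2 K f with hF
  have hder : phi2 K (pderiv (1 : Fin 2) f) = Polynomial.derivative F := phi2_pderiv K f
  have hF' : Polynomial.derivative F ≠ 0 := by
    rw [← hder]
    simpa using (phi2 K).injective.ne_iff.mpr hfy
  have hFdvd : F ∣ Polynomial.derivative F := by
    rw [← hder]; exact map_dvd (phi2 K).toAlgHom hdvd
  have hdeg : F.natDegree ≠ 0 := by
    intro h0
    obtain ⟨a, ha⟩ := Polynomial.natDegree_eq_zero.mp h0
    rw [← ha] at hF'
    simp at hF'
  have h1 := Polynomial.natDegree_le_of_dvd hFdvd hF'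
  have h2 := Polynomial.natDegree_derivative_lt hdeg
  omega

theorem stmt_4 (K : Type*) [Field K] [CharZero K]
    (f q : MvPolynomial (Fin 2) K) (s : ℕ) (c : K)
    (hf : Irreducible f) (hfy : pderiv (1 : Fin 2) f ≠ 0) (hs : 1 ≤ s)
    (hqy : pderiv (1 : Fin 2) q = f ^ s)
    (hdvd : f ∣ q + MvPolynomial.C c) :
    f ^ (s + 1) ∣ q + MvPolynomial.C c := by
  have hprime : Prime f := (UniqueFactorizationMonoid.irreducible_iff_prime).mp hf
  have hfne : f ≠ 0 := hf.ne_zero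
  have key : ∀ k, k ≤ s → f ^ (k + 1) ∣ q + MvPolynomial.C c := by
    intro k
    induction k with
    | zero => intro _; simpa using hdvd
    | succ k ih =>
      intro hk1
      obtain ⟨g, hg⟩ := ih (by omega)
      -- differentiate hg
      have hd : (f : MvPolynomial (Fin 2) K) ^ s =
          ((k + 1 : ℕ) : MvPolynomial (Fin 2) K) * f ^ k * pderiv (1 : Fin 2) f * g
            + f ^ (k + 1) * pderiv (1 : Fin 2) g := by
        have := congrArg (pderiv (1 : Fin 2)) hg
        rw [map_add, pderiv_C, add_zero, hqy, pderiv_mul, pderiv_pow] at this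
        simpa using this
      have hcancel : f ^ (s - k) =
          ((k + 1 : ℕ) : MvPolynomial (Fin 2) K) * pderiv (1 : Fin 2) f * g
            + f * pderiv (1 : Fin 2) g := by
        apply mul_left_cancel₀ (pow_ne_zero k hfne)
        rw [← pow_add]
        rw [show k + (s - k) = s by omega, hd]
        ring
      have hfdvd : f ∣ ((k + 1 : ℕ) : MvPolynomial (Fin 2) K) * pderiv (1 : Fin 2) f * g := by
        have h1 : f ∣ f ^ (s - k) := dvd_pow_self f (by omega)
        rw [hcancel] at h1
        have h2 : f ∣ f * pderiv (1 : Fin 2) g := dvd_mul_right _ _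
        exact (dvd_add_right h2).mp (by rwa [add_comm] at h1)
      have hnotC : ¬ f ∣ ((k + 1 : ℕ) : MvPolynomial (Fin 2) K) := by
        intro h
        have hu : IsUnit ((k + 1 : ℕ) : MvPolynomial (Fin 2) K) := by
          rw [show ((k + 1 : ℕ) : MvPolynomial (Fin 2) K) = MvPolynomial.C ((k + 1 : ℕ) : K) by
            simp]
          exact (isUnit_iff_ne_zero.mpr (by exact_mod_cast Nat.succ_ne_zero k)).map
            (MvPolynomial.C : K →+* MvPolynomial (Fin 2) K)
        exact hf.not_isUnit (isUnit_of_dvd_unit h hu)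
      have hg' : f ∣ g := by
        rcases hprime.dvd_mul.mp hfdvd with h | h
        · rcases hprime.dvd_mul.mp h with h' | h'
          · exact absurd h' hnotC
          · exact absurd h' (f_not_dvd_fy K f hfy)
        · exact h
      obtain ⟨g', hgg⟩ := hg'
      exact ⟨g', by rw [hg, hgg]; ring⟩
  exact key s le_rfl
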